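/- arXiv:1411.7647 — 5 statements merged into one kernel-verified Lean document; each statement's English description precedes it below -/
import Mathlib

section
/- For the real number θ_L = 2π Σ_{i=1}^∞ F(i)/8^{i+1} where F : ℕ → {-1,1}, and any j ≥ 1, the product 8^j · θ_L is congruent modulo 2π to π·F(j)/4 + δ, where |δ| ≤ 2π Σ_{k=2}^∞ 8^{-k} = 2π/56. -/
open Real

/-- For `θ_L = 2π Σ_{i=1}^∞ F(i)/8^{i+1}` with `F : ℕ → {-1,1}` and any `j ≥ 1`,
`8^j · θ_L` is congruent mod `2π` to `π·F(j)/4 + δ` with `|δ| ≤ 2π/56`. -/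
theorem stmt_0 (F : ℕ → ℝ) (hF : ∀ n, F n = 1 ∨ F n = -1) (j : ℕ) (hj : 1 ≤ j) :
    ∃ δ : ℝ, |δ| ≤ 2 * π / 56 ∧
      ∃ n : ℤ, (8 : ℝ) ^ j * (2 * π * ∑' i : ℕ, F (i + 1) / 8 ^ (i + 2)) =
        π * F j / 4 + δ + 2 * π * n := by
  obtain ⟨m, rfl⟩ : ∃ m, j = m + 1 := ⟨j - 1, (Nat.succ_pred_eq_of_pos hj).symm⟩
  have hπ := Real.pi_pos
  set g : ℕ → ℝ := fun i => F (i+1) / 8 ^ (i+2) with hg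
  have habs : ∀ i, |F i| = 1 := by
    intro i; rcases hF i with h | h <;> simp [h]
  have hb : ∀ i : ℕ, |g i| = (1/8 : ℝ)^(i+2) := by
    intro i
    simp only [hg, abs_div, habs, abs_pow]
    norm_num [div_pow]
  have hgeo0 : Summable (fun i : ℕ => (1/8 : ℝ)^i) :=
    summable_geometric_of_lt_one (by norm_num) (by norm_num)
  have hgeo : Summable (fun i : ℕ => (1/8 : ℝ)^(i+2)) := by
    have h := hgeo0.mul_right ((1/8:ℝ)^2)
    refine h.congr (fun i => ?_)
    rw [pow_add]
  have hsum : Summable g := by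
    apply Summable.of_abs
    simpa [funext hb] using hgeo
  -- split
  have hsplit := Summable.sum_add_tsum_nat_add (m+1) hsum
  -- integer part
  set ε : ℕ → ℤ := fun i => if F i = 1 then 1 else -1 with hε
  have hεF : ∀ i, (ε i : ℝ) = F i := by
    intro i
    rcases hF i with h | h
    · simp [hε, h]
    · have h1 : F i ≠ 1 := by rw [h]; norm_num
      simp only [hε, if_neg h1, h]
      norm_num
  set n : ℤ := ∑ i ∈ Finset.range m, ε (i+1) * 8^(m-1-i) with hn
  have hhead : (8:ℝ)^(m+1) * ∑ i ∈ Finset.range (m+1), g i = (n : ℝ) + F (m+1) / 8 := by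
    rw [Finset.sum_range_succ, mul_add]
    have h1 : (8:ℝ)^(m+1) * g m = F (m+1) / 8 := by
      have : (8:ℝ)^(m+2) = (8:ℝ)^(m+1) * 8 := by ring
      simp only [hg, this]
      field_simp
    rw [h1]
    congr 1
    rw [Finset.mul_sum, hn]
    push_cast
    apply Finset.sum_congr rfl
    intro i hi
    have hi' : i < m := Finset.mem_range.mp hi
    have hpow : (8:ℝ)^(m+1) / 8^(i+2) = 8^(m-1-i) := by
      rw [eq_comm, eq_div_iff (by positivity), ← pow_add]
      congr 1
      omega
    rw [hg]
    simp only []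
    rw [div_eq_mul_inv, ← mul_assoc, mul_comm ((8:ℝ)^(m+1)) (F (i+1)), mul_assoc,
      ← div_eq_mul_inv, hpow, hεF]
  -- tail
  set T : ℝ := ∑' i : ℕ, F (i + (m+1) + 1) / 8 ^ (i+2) with hT
  have htail : (8:ℝ)^(m+1) * ∑' i : ℕ, g (i + (m+1)) = T := by
    rw [← tsum_mul_left, hT]
    congr 1
    funext i
    rw [hg]
    simp only []
    have hpow : (8:ℝ)^(m+1) / 8^(i + (m+1) + 2) = 1 / 8^(i+2) := by
      rw [div_eq_div_iff (by positivity) (by positivity), one_mul, ← pow_add]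
      congr 1
      omega
    rw [div_eq_mul_inv, ← mul_assoc, mul_comm ((8:ℝ)^(m+1)) (F (i+(m+1)+1)), mul_assoc,
      ← div_eq_mul_inv]
    rw [show (8:ℝ)^(m+1) / 8^(i + (m+1) + 2) = 1 / 8^(i+2) from hpow]
    ring
  have hTsummand : Summable (fun i : ℕ => F (i + (m+1) + 1) / 8 ^ (i+2)) := by
    apply Summable.of_abs
    apply Summable.of_nonneg_of_le (fun i => abs_nonneg _) _ hgeo
    intro i
    rw [abs_div, habs, abs_pow, abs_of_nonneg (by norm_num : (0:ℝ) ≤ 8), div_pow, one_pow]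
  have hgeoval : ∑' i : ℕ, (1/8:ℝ)^(i+2) = 1/56 := by
    have h0 : ∑' i : ℕ, (1/8:ℝ)^i = 8/7 := by
      rw [tsum_geometric_of_lt_one (by norm_num) (by norm_num)]
      norm_num
    calc ∑' i : ℕ, (1/8:ℝ)^(i+2) = ∑' i : ℕ, (1/8:ℝ)^i * (1/8)^2 := by
          congr 1; funext i; rw [pow_add]
      _ = (8/7) * (1/8)^2 := by rw [tsum_mul_right, h0]
      _ = 1/56 := by norm_num
  have hTbound : |T| ≤ 1/56 := by
    have h1 : Summable (fun i : ℕ => ‖F (i + (m+1) + 1) / 8 ^ (i+2)‖) := by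
      simp only [Real.norm_eq_abs]
      exact hTsummand.abs
    calc |T| = ‖T‖ := (Real.norm_eq_abs T).symm
      _ ≤ ∑' i : ℕ, ‖F (i + (m+1) + 1) / 8 ^ (i+2)‖ := by
          rw [hT]; exact norm_tsum_le_tsum_norm h1
      _ ≤ ∑' i : ℕ, (1/8:ℝ)^(i+2) := by
          apply Summable.tsum_le_tsum _ h1 hgeo
          intro i
          rw [Real.norm_eq_abs, abs_div, habs, abs_pow,
            abs_of_nonneg (by norm_num : (0:ℝ) ≤ 8), div_pow, one_pow]
      _ = 1/56 := hgeoval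
  refine ⟨2 * π * T, ?_, n, ?_⟩
  · rw [abs_mul, abs_of_pos (by positivity : (0:ℝ) < 2 * π)]
    calc 2 * π * |T| ≤ 2 * π * (1/56) := by
          apply mul_le_mul_of_nonneg_left hTbound (by positivity)
      _ = 2 * π / 56 := by ring
  · rw [show (8:ℝ)^(m+1) * (2 * π * ∑' i : ℕ, F (i + 1) / 8 ^ (i + 2))
        = 2 * π * ((8:ℝ)^(m+1) * ∑' i : ℕ, g i) by rw [hg]; ring]
    rw [← hsplit, mul_add, hhead, htail]
    ring
end

section
/- For F : ℕ → {-1,1} and θ_L = 2π Σ_{i=1}^∞ F(i)/8^{i+1}, for every j ≥ 1 there exists δ with |δ| ≤ 2π/56 such that 8^j · θ_L + π/4 ≡ π/2 + δ (mod 2π) if F(j) = 1, and 8^j · θ_L + π/4 ≡ δ (mod 2π) if F(j) = -1. -/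
open Real

/-- For `θ_L = 2π Σ_{i=1}^∞ F(i)/8^{i+1}` with `F : ℕ → {-1,1}` and every `j ≥ 1`,
there is `δ` with `|δ| ≤ 2π/56` such that `8^j·θ_L + π/4 ≡ π/2 + δ (mod 2π)` if `F j = 1`,
and `8^j·θ_L + π/4 ≡ δ (mod 2π)` if `F j = -1`. -/
theorem stmt_1 (F : ℕ → ℝ) (hF : ∀ n, F n = 1 ∨ F n = -1) (j : ℕ) (hj : 1 ≤ j) :
    ∃ δ : ℝ, |δ| ≤ 2 * π / 56 ∧
      ((F j = 1 → ∃ n : ℤ,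
          (8 : ℝ) ^ j * (2 * π * ∑' i : ℕ, F (i + 1) / 8 ^ (i + 2)) + π / 4 =
            π / 2 + δ + 2 * π * n) ∧
       (F j = -1 → ∃ n : ℤ,
          (8 : ℝ) ^ j * (2 * π * ∑' i : ℕ, F (i + 1) / 8 ^ (i + 2)) + π / 4 =
            δ + 2 * π * n)) := by
  have habs : ∀ n, |F n| = 1 := fun n => by rcases hF n with h | h <;> simp [h]
  have hgeo0 : Summable (fun i : ℕ => (1/8 : ℝ) ^ i) :=
    summable_geometric_of_lt_one (by norm_num) (by norm_num)
  have hgeo : Summable (fun i : ℕ => (1/8 : ℝ) ^ (i + 2)) :=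
    (hgeo0.mul_left ((1/8 : ℝ) ^ 2)).congr (fun i => by ring)
  have hnorm : ∀ (g : ℕ → ℝ), (∀ n, |g n| = 1) → ∀ i : ℕ,
      ‖g i / 8 ^ (i + 2)‖ = (1/8 : ℝ) ^ (i + 2) := by
    intro g hg i
    rw [norm_div, Real.norm_eq_abs, hg, Real.norm_eq_abs, abs_pow, div_pow, one_pow]
    norm_num
  have hsumm : ∀ m : ℕ, Summable (fun i : ℕ => F (i + m) / 8 ^ (i + 2)) := fun m =>
    Summable.of_norm (hgeo.congr fun i => (hnorm (fun i => F (i + m)) (fun n => habs _) i).symm)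
  have htsum_geo : ∑' i : ℕ, (1/8 : ℝ) ^ (i + 2) = 1/56 := by
    have h1 : ∑' i : ℕ, (1/8 : ℝ) ^ i = (1 - 1/8)⁻¹ :=
      tsum_geometric_of_lt_one (by norm_num) (by norm_num)
    calc ∑' i : ℕ, (1/8 : ℝ) ^ (i + 2) = ∑' i : ℕ, (1/8 : ℝ) ^ 2 * (1/8) ^ i :=
          tsum_congr fun i => by ring
      _ = (1/8) ^ 2 * ∑' i : ℕ, (1/8 : ℝ) ^ i := tsum_mul_left
      _ = 1/56 := by rw [h1]; norm_num
  obtain ⟨k, rfl⟩ : ∃ k, j = k + 1 := ⟨j - 1, (Nat.succ_pred_eq_of_pos hj).symm⟩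
  set T : ℝ := ∑' i : ℕ, F (i + (k + 2)) / 8 ^ (i + 2) with hT
  have hTbound : |T| ≤ 1/56 := by
    rw [hT, ← Real.norm_eq_abs]
    calc ‖∑' i : ℕ, F (i + (k + 2)) / 8 ^ (i + 2)‖
        ≤ ∑' i : ℕ, ‖F (i + (k + 2)) / 8 ^ (i + 2)‖ :=
          norm_tsum_le_tsum_norm
            (hgeo.congr fun i => (hnorm (fun i => F (i + (k + 2))) (fun n => habs _) i).symm)
      _ = ∑' i : ℕ, (1/8 : ℝ) ^ (i + 2) :=
          tsum_congr fun i => hnorm (fun i => F (i + (k + 2))) (fun n => habs _) i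
      _ = 1/56 := htsum_geo
  -- integer part
  set G : ℕ → ℤ := fun n => if F n = 1 then 1 else -1 with hGdef
  have hG : ∀ n, (G n : ℝ) = F n := by
    intro n
    rcases hF n with h | h <;> simp [hGdef, h, show (-1:ℝ) ≠ 1 by norm_num]
  set N : ℤ := ∑ i ∈ Finset.range k, G (i + 1) * 8 ^ (k - 1 - i) with hN
  have hsplit := Summable.sum_add_tsum_nat_add (k + 1) (hsumm 1)
  have htail_eq : (8 : ℝ) ^ (k + 1) * ∑' i : ℕ, F (i + (k + 1) + 1) / 8 ^ (i + (k + 1) + 2) = T := by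
    rw [hT, ← tsum_mul_left]
    refine tsum_congr fun i => ?_
    have e : (8 : ℝ) ^ (i + (k + 1) + 2) = 8 ^ (i + 2) * 8 ^ (k + 1) := by
      rw [← pow_add]; congr 1; omega
    rw [show i + (k + 1) + 1 = i + (k + 2) by omega, e]
    have h8 : (8 : ℝ) ^ (i + 2) ≠ 0 := by positivity
    have h8' : (8 : ℝ) ^ (k + 1) ≠ 0 := by positivity
    field_simp
  have hfin : (8 : ℝ) ^ (k + 1) * ∑ i ∈ Finset.range (k + 1), F (i + 1) / 8 ^ (i + 2)
      = (N : ℝ) + F (k + 1) / 8 := by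
    rw [Finset.sum_range_succ, mul_add]
    congr 1
    · rw [Finset.mul_sum, hN]
      push_cast
      refine Finset.sum_congr rfl fun i hi => ?_
      have hik : i < k := Finset.mem_range.mp hi
      rw [hG]
      have e : (8 : ℝ) ^ (k + 1) = 8 ^ (i + 2) * 8 ^ (k - 1 - i) := by
        rw [← pow_add]; congr 1; omega
      rw [e]
      have h8 : (8 : ℝ) ^ (i + 2) ≠ 0 := by positivity
      field_simp
    · have e : (8 : ℝ) ^ (k + 2) = 8 ^ (k + 1) * 8 := by rw [← pow_succ]
      rw [e]
      have h8 : (8 : ℝ) ^ (k + 1) ≠ 0 := by positivity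
      field_simp
  have key : (8 : ℝ) ^ (k + 1) * ∑' i : ℕ, F (i + 1) / 8 ^ (i + 2)
      = (N : ℝ) + F (k + 1) / 8 + T := by
    rw [← hsplit, mul_add, hfin, htail_eq]
  have e : (8 : ℝ) ^ (k + 1) * (2 * π * ∑' i : ℕ, F (i + 1) / 8 ^ (i + 2))
      = 2 * π * ((N : ℝ) + F (k + 1) / 8 + T) := by
    rw [mul_left_comm, key]
  refine ⟨2 * π * T, ?_, ?_, ?_⟩
  · have hπ : 0 < π := Real.pi_pos
    rw [abs_mul, abs_of_pos (by positivity : (0:ℝ) < 2 * π)]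
    calc 2 * π * |T| ≤ 2 * π * (1/56) := by
          have := hTbound; nlinarith
      _ = 2 * π / 56 := by ring
  · intro h1
    exact ⟨N, by rw [e, h1]; ring⟩
  · intro h1
    exact ⟨N, by rw [e, h1]; ring⟩
end

section
/- With the recursion δ₀ = γ ∈ [0,1/3], δ_{k+1} = 4δ_k - b_{k+1} with b_{k+1} ∈ {0,1} and γ = Σ a_i/4^i with a_i ∈ {0,1}: if m is the first index where b_m ≠ a_m, then δ_m ∉ (-2/3, 1), and moreover δ_k ∉ (-2/3, 1) for all k ≥ m, regardless of the subsequent bits b_{k}. -/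
lemma aux_summable (a : ℕ → ℝ) (ha : ∀ i, a i = 0 ∨ a i = 1) (k : ℕ) :
    Summable (fun i : ℕ => a (k + i + 1) / 4 ^ (i + 1)) := by
  refine Summable.of_nonneg_of_le (f := fun i : ℕ => (1/4 : ℝ) ^ (i+1)) ?_ ?_ ?_
  · intro i; rcases ha (k+i+1) with h | h <;> rw [h] <;> positivity
  · intro i
    rcases ha (k+i+1) with h | h <;> rw [h] <;> simp [div_pow]
  · exact ((summable_geometric_of_lt_one (by norm_num) (by norm_num : (1/4:ℝ) < 1)).mul_left (1/4)).congr
      (by intro i; simp [pow_succ]; ring)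

noncomputable def tailSum (a : ℕ → ℝ) (k : ℕ) : ℝ := ∑' i : ℕ, a (k + i + 1) / 4 ^ (i + 1)

lemma tail_rec (a : ℕ → ℝ) (ha : ∀ i, a i = 0 ∨ a i = 1) (k : ℕ) :
    tailSum a k = a (k+1) / 4 + tailSum a (k+1) / 4 := by
  rw [tailSum, Summable.tsum_eq_zero_add (aux_summable a ha k)]
  congr 1
  · norm_num
  · rw [tailSum, ← tsum_div_const]
    congr 1 with i
    have : k + (i + 1) + 1 = k + 1 + i + 1 := by ring
    rw [this]
    rw [pow_succ]
    ring

lemma tail_nonneg (a : ℕ → ℝ) (ha : ∀ i, a i = 0 ∨ a i = 1) (k : ℕ) :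
    0 ≤ tailSum a k := by
  apply tsum_nonneg
  intro i; rcases ha (k+i+1) with h | h <;> rw [h] <;> positivity

lemma tail_le (a : ℕ → ℝ) (ha : ∀ i, a i = 0 ∨ a i = 1) (k : ℕ) :
    tailSum a k ≤ 1/3 := by
  have h1 : tailSum a k ≤ ∑' i : ℕ, (1/4 : ℝ)^(i+1) := by
    apply Summable.tsum_le_tsum _ (aux_summable a ha k)
      (((summable_geometric_of_lt_one (by norm_num) (by norm_num : (1/4:ℝ) < 1)).mul_left (1/4)).congr
        (by intro i; simp [pow_succ]; ring))
    intro i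
    rcases ha (k+i+1) with h | h <;> rw [h] <;> simp [div_pow]
  have h2 : ∑' i : ℕ, (1/4 : ℝ)^(i+1) = 1/3 := by
    have := tsum_geometric_of_lt_one (by norm_num : (0:ℝ) ≤ 1/4) (by norm_num : (1/4:ℝ) < 1)
    calc ∑' i : ℕ, (1/4 : ℝ)^(i+1) = ∑' i : ℕ, (1/4) * (1/4:ℝ)^i := by
          congr 1 with i; rw [pow_succ]; ring
      _ = (1/4) * ∑' i : ℕ, (1/4:ℝ)^i := by rw [tsum_mul_left]
      _ = 1/3 := by rw [this]; norm_num
  linarith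

lemma tail_ge (a : ℕ → ℝ) (ha : ∀ i, a i = 0 ∨ a i = 1) (k : ℕ) (h1 : a (k+1) = 1) :
    1/4 ≤ tailSum a k := by
  have := Summable.le_tsum (aux_summable a ha k) 0
    (fun j _ => by rcases ha (k+j+1) with h | h <;> rw [h] <;> positivity)
  simpa [h1, tailSum] using this

/-- With `δ₀ = γ ∈ [0,1/3]`, `δ_{k+1} = 4 δ_k − b_{k+1}`, bits `b_i ∈ {0,1}`, and
`γ = Σ a_i/4^i` with `a_i ∈ {0,1}`: if `m` is the first index where `b_m ≠ a_m`,
then `δ_m ∉ (−2/3, 1)`, and moreover `δ_k ∉ (−2/3, 1)` for all `k ≥ m`. -/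
theorem stmt_6 (a b : ℕ → ℝ) (ha : ∀ i, a i = 0 ∨ a i = 1)
    (hb : ∀ i, b i = 0 ∨ b i = 1) (γ : ℝ) (hγ0 : γ ∈ Set.Icc (0 : ℝ) (1 / 3))
    (hγ : γ = ∑' i : ℕ, a (i + 1) / 4 ^ (i + 1))
    (δ : ℕ → ℝ) (hδ0 : δ 0 = γ) (hδ : ∀ k, δ (k + 1) = 4 * δ k - b (k + 1))
    (m : ℕ) (hm : 1 ≤ m) (hfirst : ∀ i, 1 ≤ i → i < m → b i = a i)
    (hne : b m ≠ a m) :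
    δ m ∉ Set.Ioo (-(2 / 3) : ℝ) 1 ∧ ∀ k, m ≤ k → δ k ∉ Set.Ioo (-(2 / 3) : ℝ) 1 := by
  have hS : ∀ k, k < m → δ k = tailSum a k := by
    intro k
    induction k with
    | zero =>
      intro _
      rw [hδ0, hγ, tailSum]
      congr 1 with i
      norm_num
    | succ n ih =>
      intro hlt
      have hn : n < m := Nat.lt_of_succ_lt hlt
      rw [hδ n, ih hn, hfirst (n+1) (Nat.succ_le_succ (Nat.zero_le n)) hlt,
        tail_rec a ha n]
      ring
  have hm1 : m - 1 + 1 = m := Nat.sub_add_cancel hm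
  have hδm1 : δ (m-1) = tailSum a (m-1) := hS (m-1) (by omega)
  have hδm : δ m = 4 * tailSum a (m-1) - b m := by
    have h := hδ (m-1)
    rw [hm1] at h
    rw [h, hδm1]
  have key : δ m ∉ Set.Ioo (-(2 / 3) : ℝ) 1 := by
    have hrec := tail_rec a ha (m-1)
    rw [hm1] at hrec
    rcases ha m with h0 | h1
    · have hb1 : b m = 1 := by
        rcases hb m with h | h
        · exact absurd (h.trans h0.symm) hne
        · exact h
      have hle : tailSum a (m-1) ≤ 1/12 := by
        have := tail_le a ha m
        rw [hrec, h0]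
        linarith
      intro hmem
      rw [hδm, hb1] at hmem
      exact absurd hmem.1 (by linarith)
    · have hb0 : b m = 0 := by
        rcases hb m with h | h
        · exact h
        · exact absurd (h.trans h1.symm) hne
      have hge : 1/4 ≤ tailSum a (m-1) := tail_ge a ha (m-1) (by rw [hm1]; exact h1)
      intro hmem
      rw [hδm, hb0] at hmem
      exact absurd hmem.2 (by linarith)
  refine ⟨key, ?_⟩
  intro k hk
  induction k, hk using Nat.le_induction with
  | base => exact key
  | succ n hn ih =>
    rw [Set.mem_Ioo, not_and_or, not_lt, not_lt] at ih
    intro hmem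
    rw [Set.mem_Ioo] at hmem
    rcases ih with h | h <;> rcases hb (n+1) with hb' | hb' <;>
      rw [hδ n, hb'] at hmem <;> [linarith [hmem.1]; linarith [hmem.1]; linarith [hmem.2]; linarith [hmem.2]]
end

section
/- For distinct positive integers m and n, after rotating a point on the unit circle starting at angle 0 by angle √2·π exactly m times and by −√2·π exactly n times, the resulting angle θ = (m−n)√2·π satisfies sin²(θ) ≥ 1/(2(m−n)²) > 1/(2(m+n)²); in particular sin(θ) ≠ 0. -/
open Real
set_option maxHeartbeats 1000000

lemma aux_ne (k j : ℤ) (hk : k ≠ 0) : 2 * k ^ 2 - j ^ 2 ≠ 0 := by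
  intro h
  have hkR : ((k:ℝ)) ≠ 0 := Int.cast_ne_zero.mpr hk
  have hjk : (j:ℝ)^2 = 2 * (k:ℝ)^2 := by exact_mod_cast congrArg (fun z : ℤ => (z:ℝ)) (by linarith : (j^2 : ℤ) = 2 * k^2)
  have heq : Real.sqrt 2 = |(j:ℝ)/(k:ℝ)| := by
    rw [show (2:ℝ) = ((j:ℝ)/(k:ℝ))^2 by rw [div_pow]; field_simp [hjk]; linarith, Real.sqrt_sq_eq_abs]
  exact irrational_sqrt_two ⟨|(j:ℚ)/(k:ℚ)|, by rw [Rat.cast_abs]; push_cast; exact heq.symm⟩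

lemma aux_numeric (s a t : ℝ) (hs2 : s ^ 2 = 2) (hsnn : 0 ≤ s) (hs_lb : 1.414 ≤ s)
    (ha : 1 ≤ a) (ht0 : 1 / (2*a*s + 1/2) ≤ t) (ht12 : t ≤ 1/2) :
    1 / (s * a) ≤ sin (t * π) := by
  have hpi_lb : 3.141592 < π := Real.pi_gt_d6
  have hpi_ub : π < 3.15 := Real.pi_lt_d2
  have ha0 : (0:ℝ) ≤ a := by linarith
  have h1s : 1.414 ≤ a * s := by
    rw [mul_comm]
    calc (1.414:ℝ) = 1.414 * 1 := by norm_num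
    _ ≤ s * a := mul_le_mul hs_lb ha (by norm_num) hsnn
  have hden : (0:ℝ) < 2*a*s + 1/2 := by linarith
  have ht0pos : 0 < 1 / (2*a*s + 1/2) := by positivity
  have h1mem : (1 / (2*a*s + 1/2))*π ∈ Set.Icc (-(π/2)) (π/2) := by
    constructor <;> nlinarith [Real.pi_pos, ht0, ht12]
  have h2mem : t*π ∈ Set.Icc (-(π/2)) (π/2) := by
    constructor <;> nlinarith [Real.pi_pos, ht0pos, ht0]
  have hmono : sin ((1 / (2*a*s + 1/2))*π) ≤ sin (t*π) :=
    Real.strictMonoOn_sin.monotoneOn h1mem h2mem (by nlinarith [Real.pi_pos, ht0])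
  have hle1 : (1 / (2*a*s + 1/2)) * π ≤ 1 := by
    rw [div_mul_eq_mul_div, div_le_one hden]
    linarith
  have hcube := Real.sin_gt_sub_cube
    (by positivity : (0:ℝ) < (1 / (2*a*s + 1/2)) * π)
  have hpi2 : π^2 < 9.9225 := by nlinarith [Real.pi_pos]
  have hpi3 : π^3 < 31.26 := by nlinarith [Real.pi_pos, hpi2]
  have hX : 1.414 ≤ s*a := by linarith [mul_comm a s ▸ h1s]
  have haa : (1:ℝ) ≤ a^2 := by nlinarith
  have hYX : s*a ≤ (s*a)*a^2 := by nlinarith [mul_nonneg hsnn ha0]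
  have hkey : 4*π*(2*a*s+1/2)^2*(s*a) - π^3*(s*a) - 4*(2*a*s+1/2)^3 ≥ 0 := by
    have heq : 4*π*(2*a*s+1/2)^2*(s*a) - π^3*(s*a) - 4*(2*a*s+1/2)^3
        = (32*π-64)*((s*a)*a^2) + (16*π-48)*a^2 + (π - π^3 - 6)*(s*a) - 1/2 := by
      linear_combination ((16*π-32)*a^3*s + (8*π-24)*a^2) * hs2
    rw [heq]
    have hc1 : (36.5:ℝ) ≤ 32*π-64 := by linarith
    have hc2 : (2.2:ℝ) ≤ 16*π-48 := by linarith
    have hc3 : (-34.2:ℝ) ≤ π - π^3 - 6 := by linarith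
    nlinarith [mul_le_mul hc1 hYX (by linarith : (0:ℝ) ≤ s*a) (by linarith),
      mul_le_mul hc2 haa zero_le_one (by linarith),
      mul_le_mul_of_nonneg_right hc3 (by linarith : (0:ℝ) ≤ s*a), hX, hYX]
  have hnum : 1 / (s * a) ≤ (1 / (2*a*s + 1/2))*π - ((1 / (2*a*s + 1/2))*π)^3 / 4 := by
    have hsa : (0:ℝ) < s*a := by linarith
    rw [div_le_iff₀ hsa, ← sub_nonneg]
    have hexp : ((1 / (2*a*s + 1/2))*π - ((1 / (2*a*s + 1/2))*π)^3/4)*(s*a) - 1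
        = (4*π*(2*a*s+1/2)^2*(s*a) - π^3*(s*a) - 4*(2*a*s+1/2)^3)/(4*(2*a*s+1/2)^3) := by
      field_simp
    rw [hexp]
    positivity
  linarith [pow_pos (by positivity : (0:ℝ) < (1 / (2*a*s + 1/2)) * π) 3]

lemma key_pos (k : ℤ) (hk : 0 < k) :
    sin ((k : ℝ) * Real.sqrt 2 * π) ^ 2 ≥ 1 / (2 * (k : ℝ) ^ 2) := by
  set s := Real.sqrt 2 with hs
  have hs2 : s ^ 2 = 2 := Real.sq_sqrt (by norm_num)
  have hsnn : 0 ≤ s := Real.sqrt_nonneg 2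
  have hs_lb : 1.414 ≤ s := by nlinarith
  set a : ℝ := (k:ℝ) with hadef
  have ha : (1:ℝ) ≤ a := by
    rw [hadef]
    have : (1:ℤ) ≤ k := hk
    exact_mod_cast this
  set j : ℤ := round (a * s) with hjdef
  set t : ℝ := |a * s - j| with htdef
  have ht_nn : 0 ≤ t := by rw [htdef]; positivity
  have ht12 : t ≤ 1/2 := abs_sub_round _
  have h1 : (1:ℝ) ≤ |2 * a ^ 2 - (j:ℝ) ^ 2| := by
    have h0 := Int.one_le_abs (aux_ne k j hk.ne')
    have h0' : (1:ℝ) ≤ |((2 * k ^ 2 - j ^ 2 : ℤ) : ℝ)| := by exact_mod_cast h0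
    push_cast at h0'
    exact h0'
  have hprod : t * |a * s + j| = |2 * a ^ 2 - (j:ℝ)^2| := by
    rw [htdef, ← abs_mul]
    congr 1
    linear_combination a^2 * hs2
  have hjb : |(j:ℝ)| ≤ a * s + 1/2 := by
    have h2 := abs_sub_abs_le_abs_sub ((j:ℝ)) (a*s)
    have h3 : |(j:ℝ) - a*s| ≤ 1/2 := by
      rw [abs_sub_comm]; exact htdef ▸ ht12
    have h4 : |a*s| = a*s := abs_of_nonneg (by positivity)
    linarith
  have hB : |a * s + j| ≤ 2 * a * s + 1/2 := by
    have h5 := abs_add_le (a*s) ((j:ℝ))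
    have h4 : |a*s| = a*s := abs_of_nonneg (by positivity)
    linarith
  have hden : (0:ℝ) < 2*a*s + 1/2 := by positivity
  have ht0 : 1 / (2*a*s + 1/2) ≤ t := by
    rw [div_le_iff₀ hden]
    calc (1:ℝ) ≤ t * |a*s+j| := hprod ▸ h1
    _ ≤ t * (2*a*s+1/2) := mul_le_mul_of_nonneg_left hB ht_nn
  have hsineq : sin (a * s * π) ^ 2 = sin (t * π) ^ 2 := by
    have harg : a * s * π = (a*s - j) * π + (j:ℤ) * π := by push_cast; ring
    rw [harg, Real.sin_add_int_mul_pi, mul_pow]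
    have hpow : ((-1:ℝ)^(j:ℤ))^2 = 1 := by
      rw [← zpow_natCast ((-1:ℝ)^(j:ℤ)), ← zpow_mul]
      exact Even.neg_one_zpow ⟨j, by ring⟩
    rw [hpow, one_mul]
    rcases abs_cases (a*s - (j:ℝ)) with ⟨h, _⟩ | ⟨h, _⟩
    · rw [htdef, h]
    · rw [htdef, h, neg_mul, Real.sin_neg, neg_pow]
      ring
  rw [hsineq]
  have hbound : 1 / (s * a) ≤ sin (t * π) :=
    aux_numeric s a t hs2 hsnn hs_lb ha ht0 ht12
  have hpos : (0:ℝ) < 1 / (s * a) := by positivity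
  have hsq : (1 / (s*a))^2 ≤ sin (t*π)^2 := pow_le_pow_left₀ hpos.le hbound 2
  calc 1 / (2 * a^2) = (1/(s*a))^2 := by rw [div_pow, mul_pow, hs2]; norm_num
  _ ≤ sin (t*π)^2 := hsq

lemma key_all (k : ℤ) (hk : k ≠ 0) :
    sin ((k : ℝ) * Real.sqrt 2 * π) ^ 2 ≥ 1 / (2 * (k : ℝ) ^ 2) := by
  rcases hk.lt_or_gt with h | h
  · have := key_pos (-k) (by omega)
    have harg : ((-k : ℤ) : ℝ) * Real.sqrt 2 * π = -((k:ℝ) * Real.sqrt 2 * π) := by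
      push_cast; ring
    rw [harg, Real.sin_neg, neg_pow] at this
    have h2 : (((-k : ℤ)) : ℝ)^2 = (k:ℝ)^2 := by push_cast; ring
    rw [h2] at this
    simpa using this
  · exact key_pos k h

/-- For distinct positive integers `m` and `n`, the angle `θ = (m−n)·√2·π` obtained by
`m` rotations by `√2·π` and `n` rotations by `−√2·π` satisfies
`sin²θ ≥ 1/(2(m−n)²) > 1/(2(m+n)²)`; in particular `sin θ ≠ 0`. -/
theorem stmt_16 (m n : ℕ) (hm : 0 < m) (hn : 0 < n) (hmn : m ≠ n) :
    sin (((m : ℝ) - n) * Real.sqrt 2 * π) ^ 2 ≥ 1 / (2 * ((m : ℝ) - n) ^ 2) ∧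
    1 / (2 * ((m : ℝ) - n) ^ 2) > 1 / (2 * ((m : ℝ) + n) ^ 2) ∧
    sin (((m : ℝ) - n) * Real.sqrt 2 * π) ≠ 0 := by
  have hd : ((m:ℤ) - n) ≠ 0 := by
    intro h; exact hmn (by omega)
  have hcast : ((m:ℝ) - n) = (((m:ℤ) - n : ℤ) : ℝ) := by push_cast; ring
  have h1 : sin (((m : ℝ) - n) * Real.sqrt 2 * π) ^ 2 ≥ 1 / (2 * ((m : ℝ) - n) ^ 2) := by
    rw [hcast]; exact key_all _ hd
  have hdne : ((m:ℝ) - n) ≠ 0 := by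
    rw [hcast]; exact_mod_cast hd
  have hsq : (0:ℝ) < ((m:ℝ) - n)^2 := by positivity
  have h2 : 1 / (2 * ((m : ℝ) - n) ^ 2) > 1 / (2 * ((m : ℝ) + n) ^ 2) := by
    have hmn' : (0:ℝ) < (m:ℝ) := by exact_mod_cast hm
    have hn' : (0:ℝ) < (n:ℝ) := by exact_mod_cast hn
    have hlt : ((m:ℝ) - n)^2 < ((m:ℝ) + n)^2 := by nlinarith
    exact one_div_lt_one_div_of_lt (by positivity) (by linarith)
  refine ⟨h1, h2, ?_⟩
  intro h0
  have hp : (0:ℝ) < 1 / (2 * ((m:ℝ) - n)^2) := by positivity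
  rw [h0, zero_pow (by norm_num : (2:ℕ) ≠ 0)] at h1
  linarith
end

section
/- For any nonzero integer k, sin²(k·√2·π) ≥ 1/(2k²). -/
open Real

set_option maxHeartbeats 1000000 in
private lemma key_17 (k : ℤ) (hk1 : 1 ≤ k) :
    1 / (2 * (k : ℝ) ^ 2) ≤ sin ((k : ℝ) * Real.sqrt 2 * π) ^ 2 := by
  have hk0 : (1:ℝ) ≤ (k:ℝ) := by exact_mod_cast hk1
  have hs2 : Real.sqrt 2 ^ 2 = 2 := Real.sq_sqrt (by norm_num)
  have hs2nn : (0:ℝ) ≤ Real.sqrt 2 := Real.sqrt_nonneg 2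
  have hs2lb : (1.414:ℝ) ≤ Real.sqrt 2 := by nlinarith
  have hs2ub : Real.sqrt 2 ≤ 1.41422 := by nlinarith
  set x : ℝ := (k:ℝ) * Real.sqrt 2 with hx
  have hx2 : x ^ 2 = 2 * (k:ℝ)^2 := by rw [hx]; rw [mul_pow, hs2]; ring
  have hx1 : (1.414:ℝ) ≤ x := by
    rw [hx]; nlinarith
  set m : ℤ := round x with hm
  have hdr : |x - (m:ℝ)| ≤ 1/2 := abs_sub_round x
  have hmub : (m:ℝ) ≤ x + 1/2 := by
    rw [abs_le] at hdr; linarith [hdr.1]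
  have hmlb : x - 1/2 ≤ (m:ℝ) := by
    rw [abs_le] at hdr; linarith [hdr.2]
  have hmpos : (0:ℝ) < (m:ℝ) := by linarith
  -- irrationality
  have hirr : Irrational x := by
    rw [hx]
    exact irrational_sqrt_two.intCast_mul (show k ≠ 0 by omega)
  have hxm : x ≠ (m:ℝ) := hirr.ne_int m
  have hne : 2 * k ^ 2 ≠ m ^ 2 := by
    intro h
    apply hxm
    have h' : x ^ 2 = ((m:ℝ)) ^ 2 := by
      rw [hx2]; exact_mod_cast congrArg (Int.cast : ℤ → ℝ) h
    nlinarith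
  have h1le : (1:ℝ) ≤ |2 * (k:ℝ) ^ 2 - (m:ℝ) ^ 2| := by
    have h0 : 2 * k ^ 2 - m ^ 2 ≠ 0 := sub_ne_zero.mpr hne
    have h1 : (1:ℤ) ≤ |2 * k ^ 2 - m ^ 2| := Int.one_le_abs h0
    exact_mod_cast h1
  set d : ℝ := |x - (m:ℝ)| with hd
  have hd0 : 0 < d := abs_pos.mpr (sub_ne_zero.mpr hxm)
  have hd2 : d ≤ 1/2 := hdr
  -- d * (x + m) = |x^2 - m^2| ≥ 1
  have hfac : d * (x + (m:ℝ)) = |2 * (k:ℝ) ^ 2 - (m:ℝ) ^ 2| := by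
    rw [hd, ← abs_of_pos (show (0:ℝ) < x + (m:ℝ) by linarith), ← abs_mul]
    congr 1
    rw [← hx2]; ring
  have hdlb : 1 ≤ d * (x + (m:ℝ)) := by rw [hfac]; exact h1le
  -- x + m ≤ (10/3) k
  have hxub : x ≤ 1.41422 * (k:ℝ) := by rw [hx]; nlinarith
  have hsum : x + (m:ℝ) ≤ (10/3) * (k:ℝ) := by nlinarith
  have hdk : 3/10 ≤ d * (k:ℝ) := by nlinarith
  -- reduce sin to sin(dπ)
  have hpi := Real.pi_pos
  have h1 : Real.sin (x * π) = (-1:ℝ) ^ m * Real.sin ((x - (m:ℝ)) * π) := by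
    have h := Real.sin_int_mul_pi_sub (((m:ℝ) - x) * π) m
    rw [show (m:ℝ) * π - ((m:ℝ) - x) * π = x * π by ring] at h
    rw [show ((m:ℝ) - x) * π = -((x - (m:ℝ)) * π) by ring, Real.sin_neg] at h
    rw [h]; ring
  have hsgn : ((-1:ℝ) ^ m) ^ 2 = 1 := by
    rcases Int.even_or_odd m with h | h
    · rw [h.neg_one_zpow]; norm_num
    · rw [h.neg_one_zpow]; norm_num
  have hsq1 : Real.sin (x * π) ^ 2 = Real.sin ((x - (m:ℝ)) * π) ^ 2 := by
    rw [h1, mul_pow, hsgn, one_mul]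
  have hsq2 : Real.sin ((x - (m:ℝ)) * π) ^ 2 = Real.sin (d * π) ^ 2 := by
    rcases abs_cases (x - (m:ℝ)) with ⟨h, _⟩ | ⟨h, _⟩
    · rw [hd, h]
    · rw [hd, h, show -(x - (m:ℝ)) * π = -((x - (m:ℝ)) * π) by ring, Real.sin_neg]
      ring
  have hgoal : Real.sin ((k:ℝ) * Real.sqrt 2 * π) ^ 2 = Real.sin (d * π) ^ 2 := by
    rw [← hx, hsq1, hsq2]
  rw [hgoal, div_le_iff₀ (by positivity)]
  have hkpos : (0:ℝ) < (k:ℝ) := by linarith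
  have hk2 : (1:ℝ) ≤ (k:ℝ)^2 := by nlinarith
  rcases le_or_gt (1/4 : ℝ) d with hc | hc
  · -- sin(dπ) ≥ sin(π/4) = √2/2
    have hdp2 : d * π ≤ π/2 := by
      have := mul_le_mul_of_nonneg_right hd2 (le_of_lt hpi)
      linarith
    have hdp1 : π/4 ≤ d * π := by
      have := mul_le_mul_of_nonneg_right hc (le_of_lt hpi)
      linarith
    have hmem1 : π/4 ∈ Set.Icc (-(π/2)) (π/2) :=
      Set.mem_Icc.mpr ⟨by linarith, by linarith⟩
    have hmem2 : d * π ∈ Set.Icc (-(π/2)) (π/2) :=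
      Set.mem_Icc.mpr ⟨by linarith, by linarith⟩
    have hmono := Real.strictMonoOn_sin.monotoneOn hmem1 hmem2 hdp1
    rw [Real.sin_pi_div_four] at hmono
    have hs' : (1:ℝ)/2 ≤ Real.sin (d * π) ^ 2 := by nlinarith
    nlinarith
  · -- cubic bound
    have hplb : (3.141592:ℝ) ≤ π := le_of_lt Real.pi_gt_d6
    have hpub : π ≤ 3.141593 := le_of_lt Real.pi_lt_d6
    have hu0 : 0 < d * π := by positivity
    have hdp : d * π ≤ 79/100 := by
      have := mul_le_mul_of_nonneg_right (le_of_lt hc) (le_of_lt hpi)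
      linarith
    have hu1 : d * π ≤ 1 := by linarith
    have hcube' : d * π - (d * π)^3/4 ≤ Real.sin (d * π) :=
      by have := Real.sin_gt_sub_cube hu0; nlinarith [pow_pos hu0 3]
    have hdpk : 94/100 ≤ d * π * (k:ℝ) := by
      have := mul_le_mul_of_nonneg_right hdk (le_of_lt hpi)
      nlinarith
    have hsq' : (d * π)^2 ≤ (79/100)^2 := by nlinarith
    have hkey2 : (d * π)^2 * (d * π * (k:ℝ)) ≤ (79/100)^2 * (d * π * (k:ℝ)) :=
      mul_le_mul_of_nonneg_right hsq' (by positivity)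
    have hsk : 3/4 ≤ Real.sin (d * π) * (k:ℝ) := by
      nlinarith [mul_le_mul_of_nonneg_right hcube' (le_of_lt hkpos)]
    nlinarith [sq_nonneg (Real.sin (d * π) * (k:ℝ) - 3/4)]

/-- For any nonzero integer `k`, `sin²(k·√2·π) ≥ 1/(2k²)`. -/
theorem stmt_17 (k : ℤ) (hk : k ≠ 0) :
    1 / (2 * (k : ℝ) ^ 2) ≤ sin ((k : ℝ) * Real.sqrt 2 * π) ^ 2 := by
  rcases hk.lt_or_gt with h | h
  · have h1 : 1 ≤ -k := by omega
    have hkey := key_17 (-k) h1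
    push_cast at hkey
    rw [show -(k:ℝ) * Real.sqrt 2 * π = -((k:ℝ) * Real.sqrt 2 * π) by ring,
      Real.sin_neg, neg_sq, neg_sq] at hkey
    exact hkey
  · exact key_17 k (by omega)
end
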